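/- Let A be an M-matrix with a triplet representation. Then the principal square root A^{1/2} exists, is an M-matrix, and admits a triplet representation. -/

import Mathlib

open Matrix

noncomputable def toC {n : ℕ} (A : Matrix (Fin n) (Fin n) ℝ) : Matrix (Fin n) (Fin n) ℂ :=
  A.map (fun x => (x : ℂ))

def IsEig {n : ℕ} (A : Matrix (Fin n) (Fin n) ℂ) (μ : ℂ) : Prop :=
  ∃ v : Fin n → ℂ, v ≠ 0 ∧ A *ᵥ v = μ • v

noncomputable def specRad {n : ℕ} (B : Matrix (Fin n) (Fin n) ℝ) : ℝ :=
  sSup {r : ℝ | ∃ μ : ℂ, IsEig (toC B) μ ∧ r = ‖μ‖}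

def IsMmat {n : ℕ} (A : Matrix (Fin n) (Fin n) ℝ) : Prop :=
  ∃ (α : ℝ) (B : Matrix (Fin n) (Fin n) ℝ),
    (∀ i j, 0 ≤ B i j) ∧ specRad B ≤ α ∧ A = α • (1 : Matrix (Fin n) (Fin n) ℝ) - B

noncomputable def eAux : ℕ → ℝ
  | 0 => 1
  | (k+1) => eAux k * (2*k+1) / (2*(k+1))

noncomputable def sqCoef : ℕ → ℝ
  | 0 => 1
  | (k+1) => sqCoef k * (2*k-1) / (2*(k+1))

lemma eAux_pos (k : ℕ) : 0 < eAux k := by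
  induction k with
  | zero => norm_num [eAux]
  | succ k ih => rw [eAux]; positivity

lemma sqCoef_succ_eq (k : ℕ) : sqCoef (k+1) = -eAux k / (2*(k+1)) := by
  induction k with
  | zero => norm_num [sqCoef, eAux]
  | succ k ih =>
    have h1 : ((k:ℝ)+1) ≠ 0 := by positivity
    have h2 : ((k:ℝ)+1+1) ≠ 0 := by positivity
    rw [sqCoef, ih, eAux]
    push_cast
    field_simp
    ring_nf

lemma sqCoef_succ_nonpos (k : ℕ) : sqCoef (k+1) ≤ 0 := by
  rw [sqCoef_succ_eq]
  have h1 := eAux_pos k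
  have h2 : (0:ℝ) < 2*((k:ℝ)+1) := by positivity
  exact div_nonpos_of_nonpos_of_nonneg (by linarith) (by linarith)

lemma sqCoef_zero : sqCoef 0 = 1 := rfl

lemma sum_sqCoef (N : ℕ) : ∑ k ∈ Finset.range (N+1), sqCoef k = eAux N := by
  induction N with
  | zero => norm_num [sqCoef, eAux]
  | succ N ih =>
    have h1 : ((N:ℝ)+1) ≠ 0 := by positivity
    rw [Finset.sum_range_succ, ih, sqCoef_succ_eq, eAux]
    push_cast
    field_simp
    ring

lemma sum_neg_sqCoef_le (N : ℕ) :
    ∑ k ∈ Finset.range N, (-sqCoef (k+1)) ≤ 1 := by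
  have h := sum_sqCoef N
  rw [Finset.sum_range_succ'] at h
  have h2 : ∑ k ∈ Finset.range N, (-sqCoef (k+1))
      = -(∑ k ∈ Finset.range N, sqCoef (k+1)) := by
    rw [Finset.sum_neg_distrib]
  rw [sqCoef_zero] at h
  linarith [eAux_pos N]

lemma summable_neg_sqCoef : Summable (fun k => -sqCoef (k+1)) :=
  summable_of_sum_range_le (fun k => by linarith [sqCoef_succ_nonpos k]) sum_neg_sqCoef_le

lemma tsum_neg_sqCoef_le : ∑' k, (-sqCoef (k+1)) ≤ 1 :=
  Summable.tsum_le_of_sum_range_le summable_neg_sqCoef sum_neg_sqCoef_le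

lemma summable_abs_sqCoef : Summable (fun k => |sqCoef k|) := by
  have h1 : Summable (fun k => |sqCoef (k+1)|) := by
    refine summable_neg_sqCoef.congr fun k => ?_
    rw [abs_of_nonpos (sqCoef_succ_nonpos k)]
  exact (summable_nat_add_iff 1).mp h1

lemma summable_sqCoef : Summable sqCoef :=
  summable_abs_sqCoef.of_abs

lemma succ_mul_sqCoef (k : ℕ) : ((k:ℝ)+1) * sqCoef (k+1) = ((k:ℝ) - 1/2) * sqCoef k := by
  rw [sqCoef]
  have h2 : (2*((k:ℝ)+1)) ≠ 0 := by positivity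
  field_simp

noncomputable def pCoef (m : ℕ) : ℝ := ∑ k ∈ Finset.range (m+1), sqCoef k * sqCoef (m - k)

lemma sum_reflect_id (m : ℕ) :
    ∑ k ∈ Finset.range (m+1), (k:ℝ) * (sqCoef k * sqCoef (m-k))
      = ∑ k ∈ Finset.range (m+1), ((m:ℝ)-k) * (sqCoef k * sqCoef (m-k)) := by
  conv_lhs => rw [← Finset.sum_range_reflect]
  apply Finset.sum_congr rfl
  intro j hj
  have hj' : j ≤ m := Nat.lt_succ_iff.mp (Finset.mem_range.mp hj)
  simp only [Nat.add_sub_cancel]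
  rw [Nat.sub_sub_self hj', Nat.cast_sub hj']
  ring

lemma two_mul_sum (m : ℕ) :
    2 * ∑ k ∈ Finset.range (m+1), (k:ℝ) * (sqCoef k * sqCoef (m-k)) = m * pCoef m := by
  rw [two_mul]
  nth_rewrite 2 [sum_reflect_id]
  rw [← Finset.sum_add_distrib, pCoef, Finset.mul_sum]
  apply Finset.sum_congr rfl
  intro j _
  ring

lemma pCoef_rec (m : ℕ) : ((m:ℝ)+1) * pCoef (m+1) = ((m:ℝ)-1) * pCoef m := by
  have h1 := two_mul_sum (m+1)
  push_cast at h1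
  have h2 : ∑ k ∈ Finset.range (m+2), (k:ℝ) * (sqCoef k * sqCoef (m+1-k))
      = ∑ j ∈ Finset.range (m+1), ((j:ℝ)-1/2) * (sqCoef j * sqCoef (m-j)) := by
    rw [Finset.sum_range_succ']
    simp only [Nat.cast_zero, zero_mul, add_zero, Nat.cast_add, Nat.cast_one]
    apply Finset.sum_congr rfl
    intro j _
    have hs : m + 1 - (j + 1) = m - j := by omega
    rw [hs, ← mul_assoc, succ_mul_sqCoef j, mul_assoc]
  have h3 : ∑ j ∈ Finset.range (m+1), ((j:ℝ)-1/2) * (sqCoef j * sqCoef (m-j))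
      = (∑ j ∈ Finset.range (m+1), (j:ℝ) * (sqCoef j * sqCoef (m-j))) - (1/2) * pCoef m := by
    rw [pCoef, Finset.mul_sum, ← Finset.sum_sub_distrib]
    apply Finset.sum_congr rfl
    intro j _
    ring
  have h4 := two_mul_sum m
  rw [h2, h3] at h1
  linarith

lemma pCoef_zero : pCoef 0 = 1 := by simp [pCoef, sqCoef]

lemma pCoef_one : pCoef 1 = -1 := by
  norm_num [pCoef, Finset.sum_range_succ, sqCoef]

lemma pCoef_two_add (k : ℕ) : pCoef (k+2) = 0 := by
  induction k with
  | zero =>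
    have h := pCoef_rec 1
    norm_num at h
    linarith
  | succ k ih =>
    have h := pCoef_rec (k+2)
    rw [ih, mul_zero] at h
    push_cast at h
    have hk : ((k:ℝ)+2+1) ≠ 0 := by positivity
    have hp : pCoef (k+2+1) = 0 := by
      rcases mul_eq_zero.mp h with h' | h'
      · exact absurd h' hk
      · exact h'
    simpa [show k+1+2 = k+2+1 from by omega] using hp

section Helpers
open Finset
open scoped NNReal
variable {n : ℕ}

attribute [local instance] Matrix.linftyOpNormedRing Matrix.linftyOpNormedAlgebra

noncomputable example : CompleteSpace (Matrix (Fin n) (Fin n) ℝ) := by infer_instance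
noncomputable example : NormedSpace ℝ (Matrix (Fin n) (Fin n) ℝ) := by infer_instance
noncomputable example : FiniteDimensional ℝ (Matrix (Fin n) (Fin n) ℝ) := by infer_instance

lemma linfty_norm_le {M : Matrix (Fin n) (Fin n) ℝ} {K : ℝ} (hK : 0 ≤ K)
    (h : ∀ i, ∑ j, |M i j| ≤ K) : ‖M‖ ≤ K := by
  rw [Matrix.linfty_opNorm_def]
  rw [show K = ((K.toNNReal : ℝ≥0) : ℝ) from (Real.coe_toNNReal K hK).symm]
  norm_cast
  apply Finset.sup_le
  intro i _
  rw [← NNReal.coe_le_coe]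
  push_cast
  rw [Real.coe_toNNReal K hK]
  simpa [Real.norm_eq_abs] using h i

noncomputable def entryCLM (i j : Fin n) : Matrix (Fin n) (Fin n) ℝ →L[ℝ] ℝ :=
  LinearMap.toContinuousLinearMap
    { toFun := fun M => M i j, map_add' := fun _ _ => rfl, map_smul' := fun _ _ => rfl }

noncomputable def mulVecCLM (u : Fin n → ℝ) (i : Fin n) : Matrix (Fin n) (Fin n) ℝ →L[ℝ] ℝ :=
  LinearMap.toContinuousLinearMap
    { toFun := fun M => (M *ᵥ u) i,
      map_add' := by intros; simp [Matrix.add_mulVec],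
      map_smul' := by intros; simp [Matrix.smul_mulVec] }

lemma mulVec_mono {M : Matrix (Fin n) (Fin n) ℝ} (hM : ∀ i j, 0 ≤ M i j) {x y : Fin n → ℝ}
    (h : ∀ j, x j ≤ y j) (i : Fin n) : (M *ᵥ x) i ≤ (M *ᵥ y) i := by
  simp only [Matrix.mulVec, dotProduct]
  exact Finset.sum_le_sum fun j _ => mul_le_mul_of_nonneg_left (h j) (hM i j)

lemma eig_bound {M : Matrix (Fin n) (Fin n) ℝ} (hM : ∀ i j, 0 ≤ M i j) {u : Fin n → ℝ}
    (hu : ∀ i, 0 < u i) {r : ℝ} (hr : ∀ i, (M *ᵥ u) i ≤ r * u i) {μ : ℂ}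
    (hμ : IsEig (toC M) μ) : ‖μ‖ ≤ r := by
  obtain ⟨v, hv, heig⟩ := hμ
  obtain ⟨j₀, hj₀⟩ := Function.ne_iff.mp hv
  obtain ⟨i, -, hi⟩ := Finset.exists_max_image Finset.univ
    (fun j => ‖v j‖ / u j) ⟨j₀, Finset.mem_univ j₀⟩
  have hvi : 0 < ‖v i‖ := by
    have h1 : 0 < ‖v j₀‖ / u j₀ := div_pos (by simpa using hj₀) (hu j₀)
    have h2 := hi j₀ (Finset.mem_univ j₀)
    have h3 := lt_of_lt_of_le h1 h2
    rcases div_pos_iff.mp h3 with ⟨h, _⟩ | ⟨_, h⟩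
    · exact h
    · linarith [hu i]
  have hmax : ∀ j, ‖v j‖ * u i ≤ ‖v i‖ * u j := by
    intro j
    have := hi j (Finset.mem_univ j)
    rw [div_le_div_iff₀ (hu j) (hu i)] at this
    linarith
  have heigi : ∑ j, (M i j : ℂ) * v j = μ * v i := by
    have := congrFun heig i
    simpa [toC, Matrix.mulVec, dotProduct, Matrix.map_apply] using this
  have hchain : ‖μ‖ * ‖v i‖ * u i ≤ r * ‖v i‖ * u i := by
    have h1 : ‖μ * v i‖ ≤ ∑ j, M i j * ‖v j‖ := by
      rw [← heigi]
      refine le_trans (norm_sum_le _ _) (Finset.sum_le_sum fun j _ => ?_)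
      rw [norm_mul]
      exact mul_le_mul_of_nonneg_right (by simp [Complex.norm_real, abs_of_nonneg (hM i j)]) (norm_nonneg _)
    have h2 : (∑ j, M i j * ‖v j‖) * u i ≤ (∑ j, M i j * u j) * ‖v i‖ := by
      rw [Finset.sum_mul, Finset.sum_mul]
      refine Finset.sum_le_sum fun j _ => ?_
      have := hmax j
      have := hM i j
      nlinarith
    have h3 : (∑ j, M i j * u j) ≤ r * u i := by
      have := hr i
      simpa [Matrix.mulVec, dotProduct] using this
    calc ‖μ‖ * ‖v i‖ * u i = ‖μ * v i‖ * u i := by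
          rw [norm_mul]
        _ ≤ (∑ j, M i j * ‖v j‖) * u i :=
          mul_le_mul_of_nonneg_right h1 (hu i).le
        _ ≤ (∑ j, M i j * u j) * ‖v i‖ := h2
        _ ≤ r * u i * ‖v i‖ :=
          mul_le_mul_of_nonneg_right h3 (norm_nonneg _)
        _ = r * ‖v i‖ * u i := by ring
  have hpos : 0 < ‖v i‖ * u i := mul_pos hvi (hu i)
  nlinarith

/-- If A is an M-matrix with a triplet representation, then the principal square root of A
exists, is an M-matrix, and admits a triplet representation. -/
theorem stmt10 {n : ℕ} (A : Matrix (Fin n) (Fin n) ℝ) (hA : IsMmat A)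
    (ht : ∃ (u w : Fin n → ℝ), (∀ i, 0 < u i) ∧ (∀ i, 0 ≤ w i) ∧ A *ᵥ u = w) :
    ∃ S : Matrix (Fin n) (Fin n) ℝ,
      (∃ p : Polynomial ℝ, S = Polynomial.aeval A p) ∧
      S * S = A ∧
      (∀ μ : ℂ, IsEig (toC S) μ → μ ≠ 0 → 0 < μ.re) ∧
      IsMmat S ∧
      ∃ (u w : Fin n → ℝ), (∀ i, 0 < u i) ∧ (∀ i, 0 ≤ w i) ∧ S *ᵥ u = w := by
  classical
  obtain ⟨α, B, hB, hspec, hAeq⟩ := hA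
  obtain ⟨u, w, hu, hw, hAu⟩ := ht
  rcases Nat.eq_zero_or_pos n with hn | hn
  · subst hn
    refine ⟨A, ⟨Polynomial.X, by simp⟩, Subsingleton.elim _ _, ?_,
      ⟨α, B, hB, hspec, hAeq⟩, ⟨u, w, hu, hw, hAu⟩⟩
    rintro μ ⟨v, hv, -⟩ -
    exact absurd (funext fun i => i.elim0) hv
  have hα0 : 0 ≤ α := by
    refine le_trans (Real.sSup_nonneg ?_) hspec
    rintro r ⟨μ, -, rfl⟩
    exact norm_nonneg μ
  have hBu : B *ᵥ u = α • u - w := by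
    have h1 : A *ᵥ u = α • u - B *ᵥ u := by
      rw [hAeq, Matrix.sub_mulVec, Matrix.smul_mulVec, Matrix.one_mulVec]
    rw [hAu] at h1
    rw [eq_sub_iff_add_eq] at h1 ⊢
    rw [add_comm] at h1
    exact h1
  rcases eq_or_lt_of_le hα0 with hα | hα
  · -- α = 0, so A = 0
    have hB0 : B = 0 := by
      ext i j
      have h1 : (B *ᵥ u) i = -w i := by rw [hBu]; simp [← hα]
      have h2 : ∀ k ∈ Finset.univ, 0 ≤ B i k * u k :=
        fun k _ => mul_nonneg (hB i k) (hu k).le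
      have h3 : ∑ k, B i k * u k = 0 := by
        have hBi : (B *ᵥ u) i = ∑ k, B i k * u k := by
          simp [Matrix.mulVec, dotProduct]
        have := hw i
        have := Finset.sum_nonneg h2
        linarith [h1, hBi]
      have h4 := (Finset.sum_eq_zero_iff_of_nonneg h2).mp h3 j (Finset.mem_univ j)
      rcases mul_eq_zero.mp h4 with h | h
      · simpa using h
      · exact absurd h (ne_of_gt (hu j))
    have hA0 : A = 0 := by rw [hAeq, ← hα, hB0]; simp
    have heig0 : ∀ μ : ℂ, IsEig (toC (0 : Matrix (Fin n) (Fin n) ℝ)) μ → μ = 0 := by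
      rintro μ ⟨v, hv, he⟩
      have h1 : toC (0 : Matrix (Fin n) (Fin n) ℝ) = 0 := by
        ext i j; simp [toC]
      rw [h1, Matrix.zero_mulVec] at he
      rcases smul_eq_zero.mp he.symm with h | h
      · exact h
      · exact absurd h hv
    refine ⟨0, ⟨0, by simp⟩, by rw [hA0]; simp, ?_, ⟨0, 0, by simp, ?_, by simp⟩,
      ⟨u, 0, hu, fun i => le_refl 0, by simp⟩⟩
    · intro μ hμ hμ0
      exact absurd (heig0 μ hμ) hμ0
    · refine Real.sSup_le ?_ le_rfl
      rintro r ⟨μ, hμ, rfl⟩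
      rw [heig0 μ hμ]
      simp
  · -- main case : α > 0
    have hαne : α ≠ 0 := ne_of_gt hα
    set C : Matrix (Fin n) (Fin n) ℝ := α⁻¹ • B with hCdef
    have hC : ∀ i j, 0 ≤ C i j := by
      intro i j
      have h1 : C i j = α⁻¹ * B i j := rfl
      rw [h1]
      exact mul_nonneg (inv_nonneg.mpr hα0) (hB i j)
    have hCu : ∀ i, (C *ᵥ u) i ≤ u i := by
      intro i
      have h1 : C *ᵥ u = α⁻¹ • (B *ᵥ u) := Matrix.smul_mulVec α⁻¹ B u
      rw [h1, hBu]
      have h2a : (α⁻¹ • (α • u - w)) i = α⁻¹ * (α * u i - w i) := rfl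
      have h2 : (α⁻¹ • (α • u - w)) i = u i - α⁻¹ * w i := by
        rw [h2a, mul_sub, ← mul_assoc, inv_mul_cancel₀ hαne, one_mul]
      rw [h2]
      have := hw i
      have : 0 ≤ α⁻¹ * w i := mul_nonneg (inv_nonneg.mpr hα0) (hw i)
      linarith
    have hCk : ∀ k : ℕ, (∀ i j, 0 ≤ (C^k) i j) ∧ (∀ i, ((C^k) *ᵥ u) i ≤ u i) := by
      intro k
      induction k with
      | zero =>
        refine ⟨fun i j => ?_, fun i => ?_⟩
        · rw [pow_zero, Matrix.one_apply]
          split <;> norm_num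
        · rw [pow_zero, Matrix.one_mulVec]
      | succ k ih =>
        refine ⟨fun i j => ?_, fun i => ?_⟩
        · rw [pow_succ]
          simp only [Matrix.mul_apply]
          exact Finset.sum_nonneg fun l _ => mul_nonneg (ih.1 i l) (hC l j)
        · rw [pow_succ, ← Matrix.mulVec_mulVec]
          exact le_trans (mulVec_mono ih.1 hCu i) (ih.2 i)
    have hne : Nonempty (Fin n) := ⟨⟨0, hn⟩⟩
    obtain ⟨b, -, hbmin⟩ := Finset.exists_min_image Finset.univ u ⟨⟨0, hn⟩, Finset.mem_univ _⟩
    obtain ⟨c, -, hcmax⟩ := Finset.exists_max_image Finset.univ u ⟨⟨0, hn⟩, Finset.mem_univ _⟩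
    set K : ℝ := u c / u b with hKdef
    have hK0 : 0 ≤ K := le_of_lt (div_pos (hu c) (hu b))
    have hnorm : ∀ k, ‖C^k‖ ≤ K := by
      intro k
      apply linfty_norm_le hK0
      intro i
      have h1 : ∀ j, |(C^k) i j| = (C^k) i j := fun j => abs_of_nonneg ((hCk k).1 i j)
      rw [Finset.sum_congr rfl fun j _ => h1 j]
      have h2 : u b * ∑ j, (C^k) i j ≤ u i := by
        calc u b * ∑ j, (C^k) i j = ∑ j, u b * (C^k) i j := Finset.mul_sum _ _ _
          _ ≤ ∑ j, (C^k) i j * u j := by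
            refine Finset.sum_le_sum fun j _ => ?_
            have h3 := hbmin j (Finset.mem_univ j)
            have h4 := (hCk k).1 i j
            nlinarith
          _ = ((C^k) *ᵥ u) i := by simp [Matrix.mulVec, dotProduct]
          _ ≤ u i := (hCk k).2 i
      rw [hKdef, le_div_iff₀ (hu b)]
      have h5 := hcmax i (Finset.mem_univ i)
      nlinarith [hu b]
    have hsn : Summable (fun k => ‖sqCoef k • C^k‖) := by
      refine Summable.of_nonneg_of_le (fun k => norm_nonneg _) (fun k => ?_)
        (summable_abs_sqCoef.mul_right K)
      rw [norm_smul, Real.norm_eq_abs]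
      exact mul_le_mul_of_nonneg_left (hnorm k) (abs_nonneg _)
    have hsum : Summable (fun k => sqCoef k • C^k) := hsn.of_norm
    set T : Matrix (Fin n) (Fin n) ℝ := ∑' k, sqCoef k • C^k with hTdef
    have hTT : T * T = 1 - C := by
      rw [hTdef]
      refine (tsum_mul_tsum_eq_tsum_sum_antidiagonal_of_summable_norm hsn hsn).trans ?_
      have h2 : ∀ m : ℕ, (∑ kl ∈ antidiagonal m,
          (sqCoef kl.1 • C^kl.1) * (sqCoef kl.2 • C^kl.2)) = pCoef m • C^m := by
        intro m
        rw [Finset.Nat.sum_antidiagonal_eq_sum_range_succ_mk]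
        rw [pCoef, Finset.sum_smul]
        refine Finset.sum_congr rfl fun k hk => ?_
        have hk' : k ≤ m := Nat.lt_succ_iff.mp (Finset.mem_range.mp hk)
        rw [smul_mul_smul_comm, ← pow_add, Nat.add_sub_cancel' hk']
      refine (tsum_congr h2).trans ?_
      have hsupp : ∀ m ∉ ({0, 1} : Finset ℕ), pCoef m • C^m = 0 := by
        intro m hm
        simp only [Finset.mem_insert, Finset.mem_singleton] at hm
        push_neg at hm
        obtain ⟨k, rfl⟩ : ∃ k, m = k + 2 := by
          refine ⟨m - 2, ?_⟩
          omega
        rw [pCoef_two_add, zero_smul]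
      rw [tsum_eq_sum hsupp, Finset.sum_pair (by norm_num : (0:ℕ) ≠ 1)]
      rw [pCoef_zero, pCoef_one, pow_zero, pow_one, one_smul, neg_one_smul]
      rw [sub_eq_add_neg]
    set S : Matrix (Fin n) (Fin n) ℝ := Real.sqrt α • T with hSdef
    have hsqα : Real.sqrt α * Real.sqrt α = α := Real.mul_self_sqrt hα0
    have hsqpos : 0 < Real.sqrt α := Real.sqrt_pos.mpr hα
    have hSS : S * S = A := by
      rw [hSdef, smul_mul_smul_comm, hTT, hsqα, hAeq, smul_sub]
      congr 1
      rw [hCdef, smul_smul, mul_inv_cancel₀ hαne, one_smul]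
    -- entrywise sums
    have hentry : ∀ i j, Summable (fun k => sqCoef k * (C^k) i j) ∧
        T i j = ∑' k, sqCoef k * (C^k) i j := by
      intro i j
      have h1 : ∀ k, (entryCLM (n := n) i j) (sqCoef k • C^k) = sqCoef k * (C^k) i j := by
        intro k
        rfl
      constructor
      · have := (hsum.map (entryCLM (n := n) i j).toLinearMap.toAddMonoidHom
          (entryCLM (n := n) i j).continuous)
        refine this.congr fun k => ?_
        simpa using h1 k
      · have h2 := (entryCLM (n := n) i j).map_tsum hsum
        have h3 : (entryCLM (n := n) i j) T = T i j := rfl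
        rw [← h3, hTdef, h2]
        exact tsum_congr h1
    have hmv : ∀ i, Summable (fun k => sqCoef k * ((C^k *ᵥ u) i)) ∧
        (T *ᵥ u) i = ∑' k, sqCoef k * ((C^k *ᵥ u) i) := by
      intro i
      have h1 : ∀ k, (mulVecCLM (n := n) u i) (sqCoef k • C^k) = sqCoef k * ((C^k *ᵥ u) i) := by
        intro k
        simp [mulVecCLM, Matrix.smul_mulVec, smul_eq_mul]
      constructor
      · have := (hsum.map (mulVecCLM (n := n) u i).toLinearMap.toAddMonoidHom
          (mulVecCLM (n := n) u i).continuous)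
        refine this.congr fun k => ?_
        simpa using h1 k
      · have h2 := (mulVecCLM (n := n) u i).map_tsum hsum
        have h3 : (mulVecCLM (n := n) u i) T = (T *ᵥ u) i := by simp [mulVecCLM]
        rw [← h3, hTdef, h2]
        exact tsum_congr h1
    have hTu_nonneg : ∀ i, 0 ≤ (T *ᵥ u) i := by
      intro i
      rw [(hmv i).2, Summable.tsum_eq_zero_add (hmv i).1]
      have h0 : sqCoef 0 * ((C^0 *ᵥ u) i) = u i := by
        simp [sqCoef_zero, Matrix.one_mulVec]
      rw [h0]
      have hs1 : Summable (fun k => sqCoef (k+1) * ((C^(k+1) *ᵥ u) i)) :=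
        (summable_nat_add_iff (f := fun k => sqCoef k * ((C^k *ᵥ u) i)) 1).mpr (hmv i).1
      have hs2 : Summable (fun k : ℕ => sqCoef (k+1) * u i) := by
        have : Summable (fun k => sqCoef (k+1)) := by simpa using summable_neg_sqCoef.neg
        exact this.mul_right _
      have hterm : ∀ k : ℕ, sqCoef (k+1) * u i ≤ sqCoef (k+1) * ((C^(k+1) *ᵥ u) i) :=
        fun k => mul_le_mul_of_nonpos_left ((hCk (k+1)).2 i) (sqCoef_succ_nonpos k)
      have h1 : ∑' k : ℕ, sqCoef (k+1) * u i ≤ ∑' k, sqCoef (k+1) * ((C^(k+1) *ᵥ u) i) :=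
        Summable.tsum_le_tsum hterm hs2 hs1
      have h2 : ∑' k : ℕ, sqCoef (k+1) * u i = (∑' k, sqCoef (k+1)) * u i := tsum_mul_right
      have h3 : (∑' k, sqCoef (k+1)) = -(∑' k, -sqCoef (k+1)) := by
        rw [← tsum_neg]
        simp
      have h4 := tsum_neg_sqCoef_le
      have h5 : -(u i) ≤ ∑' k, sqCoef (k+1) * ((C^(k+1) *ᵥ u) i) := by
        rw [h2, h3] at h1
        nlinarith [hu i, mul_nonneg (sub_nonneg.mpr h4) (hu i).le]
      linarith
    have hSu : ∀ i, 0 ≤ (S *ᵥ u) i := by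
      intro i
      rw [hSdef, Matrix.smul_mulVec]
      have : (Real.sqrt α • (T *ᵥ u)) i = Real.sqrt α * (T *ᵥ u) i := rfl
      rw [this]
      exact mul_nonneg hsqpos.le (hTu_nonneg i)
    -- B' and M-matrix structure
    set B' : Matrix (Fin n) (Fin n) ℝ := Real.sqrt α • (1 - T) with hB'def
    have hSB' : S = Real.sqrt α • (1 : Matrix (Fin n) (Fin n) ℝ) - B' := by
      rw [hB'def, hSdef, smul_sub]
      abel
    have hE : ∀ i j, 0 ≤ (1 - T) i j := by
      intro i j
      have h1 : (1 - T) i j = (1 : Matrix (Fin n) (Fin n) ℝ) i j - T i j := by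
        simp [Matrix.sub_apply]
      rw [h1, (hentry i j).2, Summable.tsum_eq_zero_add (hentry i j).1]
      have h0 : sqCoef 0 * ((C^0) i j) = (1 : Matrix (Fin n) (Fin n) ℝ) i j := by
        simp [sqCoef_zero]
      rw [h0]
      have h2 : 0 ≤ -∑' k, sqCoef (k+1) * ((C^(k+1)) i j) := by
        rw [← tsum_neg]
        refine tsum_nonneg fun k => ?_
        have := sqCoef_succ_nonpos k
        have := (hCk (k+1)).1 i j
        nlinarith
      linarith
    have hB'0 : ∀ i j, 0 ≤ B' i j := by
      intro i j
      have h1 : B' i j = Real.sqrt α * (1 - T) i j := rfl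
      rw [h1]
      exact mul_nonneg hsqpos.le (hE i j)
    have hB'u : ∀ i, (B' *ᵥ u) i ≤ Real.sqrt α * u i := by
      intro i
      rw [hB'def, Matrix.smul_mulVec]
      have h1 : (Real.sqrt α • ((1 - T) *ᵥ u)) i = Real.sqrt α * ((1 - T) *ᵥ u) i := rfl
      rw [h1, Matrix.sub_mulVec, Matrix.one_mulVec]
      have h2 : (u - T *ᵥ u) i = u i - (T *ᵥ u) i := rfl
      rw [h2]
      nlinarith [hTu_nonneg i, hsqpos]
    have hB'eig : ∀ μ : ℂ, IsEig (toC B') μ → ‖μ‖ ≤ Real.sqrt α :=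
      fun μ hμ => eig_bound hB'0 hu hB'u hμ
    have htrans : ∀ μ : ℂ, IsEig (toC S) μ → IsEig (toC B') ((Real.sqrt α : ℂ) - μ) := by
      rintro μ ⟨v, hv, he⟩
      refine ⟨v, hv, ?_⟩
      have h1 : toC B' = (Real.sqrt α : ℂ) • (1 : Matrix (Fin n) (Fin n) ℂ) - toC S := by
        have hBS : B' = Real.sqrt α • (1 : Matrix (Fin n) (Fin n) ℝ) - S := by
          rw [hSB']; abel
        ext i j
        simp only [toC, Matrix.map_apply, hBS, Matrix.sub_apply, Matrix.smul_apply,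
          smul_eq_mul, Matrix.one_apply]
        push_cast
        split <;> simp
      rw [h1, Matrix.sub_mulVec, he, Matrix.smul_mulVec, Matrix.one_mulVec, sub_smul]
    have heigS : ∀ μ : ℂ, IsEig (toC S) μ → μ ≠ 0 → 0 < μ.re := by
      intro μ hμ hμ0
      have h1 := hB'eig _ (htrans μ hμ)
      have h2 : Complex.normSq ((Real.sqrt α : ℂ) - μ) ≤ α := by
        have h3 : ‖(Real.sqrt α : ℂ) - μ‖ ^ 2 ≤ Real.sqrt α ^ 2 :=
          pow_le_pow_left₀ (norm_nonneg _) h1 2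
        rw [Complex.sq_norm] at h3
        calc Complex.normSq ((Real.sqrt α : ℂ) - μ) ≤ Real.sqrt α ^ 2 := h3
          _ = α := by rw [sq, hsqα]
      have h4 : 0 < Complex.normSq μ := Complex.normSq_pos.mpr hμ0
      rw [Complex.normSq_apply] at h2 h4
      have h5 : ((Real.sqrt α : ℂ) - μ).re = Real.sqrt α - μ.re := by simp
      have h6 : ((Real.sqrt α : ℂ) - μ).im = -μ.im := by simp
      rw [h5, h6] at h2
      nlinarith [hsqpos]
    have hspecS : specRad B' ≤ Real.sqrt α := by
      refine Real.sSup_le ?_ hsqpos.le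
      rintro r ⟨μ, hμ, rfl⟩
      exact hB'eig μ hμ
    -- polynomial
    have hpoly : ∃ p : Polynomial ℝ, S = Polynomial.aeval A p := by
      set R := Algebra.adjoin ℝ ({A} : Set (Matrix (Fin n) (Fin n) ℝ)) with hRdef
      have hBmem : B ∈ R := by
        have hBA : B = α • (1 : Matrix (Fin n) (Fin n) ℝ) - A := by
          rw [hAeq]; abel
        rw [hBA]
        exact sub_mem (Subalgebra.smul_mem R (one_mem R) α)
          (Algebra.self_mem_adjoin_singleton ℝ A)
      have hCmem : C ∈ R := Subalgebra.smul_mem R hBmem α⁻¹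
      have hCkmem : ∀ k, C^k ∈ R := fun k => pow_mem hCmem k
      have hpart : ∀ N, (∑ k ∈ Finset.range N, sqCoef k • C^k) ∈ R :=
        fun N => sum_mem fun k _ => Subalgebra.smul_mem R (hCkmem k) _
      have hclosed : IsClosed ((Subalgebra.toSubmodule R :
          Submodule ℝ (Matrix (Fin n) (Fin n) ℝ)) : Set (Matrix (Fin n) (Fin n) ℝ)) :=
        Submodule.closed_of_finiteDimensional _
      have hTmem : T ∈ R := by
        have htend := hsum.hasSum.tendsto_sum_nat
        have hmem := hclosed.mem_of_tendsto htend
          (Filter.Eventually.of_forall fun N =>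
            (Subalgebra.mem_toSubmodule R).mpr (hpart N))
        exact (Subalgebra.mem_toSubmodule R).mp hmem
      have hSmem : S ∈ R := Subalgebra.smul_mem R hTmem _
      rw [hRdef, Algebra.adjoin_singleton_eq_range_aeval] at hSmem
      obtain ⟨p, hp⟩ := hSmem
      exact ⟨p, hp.symm⟩
    exact ⟨S, hpoly, hSS, heigS,
      ⟨Real.sqrt α, B', hB'0, hspecS, hSB'⟩,
      ⟨u, S *ᵥ u, hu, hSu, rfl⟩⟩

end Helpers
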